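/- Let g be analytic near 0 with g(z) = z(1 + a z^p + o(z^p)) for some real a > 0. Then there exists r₀ > 0 such that for all z with 0 < |z| < r₀ and |arg(z^p)| ≤ π/8, one has |g(z)| > |z| and |g'(z)| > |g(z)|/|z| > 1. -/

import Mathlib

open Filter Asymptotics Topology

set_option maxHeartbeats 1000000

private lemma aux_deriv_isLittleO {h : ℂ → ℂ} {n : ℕ} (hh : AnalyticAt ℂ h 0)
    (ho : h =o[𝓝 (0:ℂ)] fun z => z ^ (n+1)) :
    deriv h =o[𝓝 (0:ℂ)] fun z => z ^ n := by
  rcases eq_or_ne (analyticOrderAt h 0) ⊤ with htop | hne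
  · have hz : h =ᶠ[𝓝 (0:ℂ)] fun _ => 0 := analyticOrderAt_eq_top.mp htop
    have h2 : deriv h =ᶠ[𝓝 (0:ℂ)] fun _ => (0:ℂ) := by
      simpa using hz.deriv
    exact h2.trans_isLittleO (isLittleO_zero _ _)
  · lift analyticOrderAt h 0 to ℕ using hne with m hm
    obtain ⟨k, hk, hk0, hfac⟩ := (hh.analyticOrderAt_eq_natCast (n := m)).mp hm.symm
    simp only [sub_zero, smul_eq_mul] at hfac
    -- m ≥ n + 2
    have hmge : n + 2 ≤ m := by
      by_contra hlt
      have hmle : m ≤ n + 1 := by omega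
      have h1 : Tendsto k (𝓝[≠] (0:ℂ)) (𝓝 0) := by
        rw [NormedAddCommGroup.tendsto_nhds_zero]
        intro ε hε
        have hev := ho.def (half_pos hε)
        have hball : ∀ᶠ z : ℂ in 𝓝 0, ‖z‖ ≤ 1 :=
          Metric.eventually_nhds_iff.mpr
            ⟨1, one_pos, fun {z} hz => by rw [dist_zero_right] at hz; linarith⟩
        filter_upwards [(hev.and (hfac.and hball)).filter_mono nhdsWithin_le_nhds,
          self_mem_nhdsWithin] with z hz hz0
        obtain ⟨hz1, hz2, hz3⟩ := hz
        have hzne : z ≠ 0 := hz0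
        have hzm : (0:ℝ) < ‖z‖ ^ m := pow_pos (norm_pos_iff.mpr hzne) m
        have heq : ‖z‖ ^ m * ‖k z‖ = ‖h z‖ := by
          rw [hz2, norm_mul, norm_pow]
        have hle : ‖z‖ ^ (n+1) ≤ ‖z‖ ^ m :=
          pow_le_pow_of_le_one (norm_nonneg _) hz3 hmle
        have : ‖z‖ ^ m * ‖k z‖ ≤ ε / 2 * ‖z‖ ^ m := by
          rw [heq]
          calc ‖h z‖ ≤ ε / 2 * ‖z ^ (n+1)‖ := hz1
            _ = ε / 2 * ‖z‖ ^ (n+1) := by rw [norm_pow]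
            _ ≤ ε / 2 * ‖z‖ ^ m := by nlinarith
        have hk_le : ‖k z‖ ≤ ε / 2 := by nlinarith
        simpa using hk_le.trans_lt (by linarith)
      have h2 : Tendsto k (𝓝[≠] (0:ℂ)) (𝓝 (k 0)) :=
        hk.continuousAt.continuousWithinAt
      exact hk0 (tendsto_nhds_unique h2 h1)
    set j := m - (n + 2) with hj
    have hmj : m = n + 2 + j := by omega
    set k₂ : ℂ → ℂ := fun z => z ^ j * k z with hk₂def
    have hk₂ : AnalyticAt ℂ k₂ 0 := (analyticAt_id.pow j).mul hk
    have hfac₂ : h =ᶠ[𝓝 (0:ℂ)] fun z => z ^ (n+2) * k₂ z := by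
      filter_upwards [hfac] with z hz
      rw [hz, hmj, pow_add, hk₂def]; ring
    -- continuity of deriv k₂ at 0
    obtain ⟨s, hs_mem, hs⟩ := hk₂.exists_mem_nhds_analyticOnNhd
    have hdk₂ : AnalyticAt ℂ (deriv k₂) 0 := hs.deriv 0 (mem_of_mem_nhds hs_mem)
    have hderiv_eq : deriv h =ᶠ[𝓝 (0:ℂ)]
        fun z => ((n:ℂ)+2) * z ^ (n+1) * k₂ z + z ^ (n+2) * deriv k₂ z := by
      filter_upwards [hfac₂.deriv, hk₂.eventually_analyticAt] with z h1 h2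
      rw [h1, deriv_fun_mul (differentiableAt_pow _) h2.differentiableAt, deriv_pow_field]
      push_cast
      ring
    have T1 : (fun z : ℂ => ((n:ℂ)+2) * z ^ (n+1) * k₂ z) =o[𝓝 (0:ℂ)] fun z => z ^ n := by
      have b1 : (fun z : ℂ => z ^ (n+1)) =o[𝓝 (0:ℂ)] fun z => z ^ n :=
        isLittleO_pow_pow (Nat.lt_succ_self n)
      have b2 : k₂ =O[𝓝 (0:ℂ)] (fun _ => (1:ℂ)) :=
        hk₂.continuousAt.isBigO_one ℂ
      have := (b1.const_mul_left ((n:ℂ)+2)).mul_isBigO b2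
      exact this.congr (fun z => by ring) (fun z => by ring)
    have T2 : (fun z : ℂ => z ^ (n+2) * deriv k₂ z) =o[𝓝 (0:ℂ)] fun z => z ^ n := by
      have b1 : (fun z : ℂ => z ^ (n+2)) =o[𝓝 (0:ℂ)] fun z => z ^ n :=
        isLittleO_pow_pow (by omega)
      have b2 : deriv k₂ =O[𝓝 (0:ℂ)] (fun _ => (1:ℂ)) :=
        hdk₂.continuousAt.isBigO_one ℂ
      exact (b1.mul_isBigO b2).congr (fun z => rfl) (fun z => by ring)
    exact hderiv_eq.trans_isLittleO (T1.add T2)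

/-- If `g` is analytic near `0` with `g(z) = z(1 + a z^p + o(z^p))` for real
`a > 0`, then there is `r₀ > 0` such that for `0 < |z| < r₀` with `|arg(z^p)| ≤ π/8`
one has `|g(z)| > |z|` and `|g'(z)| > |g(z)|/|z| > 1`. -/
theorem stmt1 (g : ℂ → ℂ) (a : ℝ) (p : ℕ) (ha : 0 < a) (hp : 1 ≤ p)
    (hg : AnalyticAt ℂ g 0)
    (hexp : (fun z => g z - z * (1 + (a : ℂ) * z ^ p)) =o[𝓝 (0 : ℂ)] fun z => z ^ (p + 1)) :
    ∃ r₀ > (0 : ℝ), ∀ z : ℂ, 0 < ‖z‖ → ‖z‖ < r₀ → |Complex.arg (z ^ p)| ≤ Real.pi / 8 →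
      ‖g z‖ > ‖z‖ ∧ ‖deriv g z‖ > ‖g z‖ / ‖z‖ ∧ ‖g z‖ / ‖z‖ > 1 := by
  set c : ℝ := Real.cos (Real.pi / 8) with hcdef
  have hc : 1/2 < c := by
    rw [hcdef, ← Real.cos_pi_div_three]
    exact Real.cos_lt_cos_of_nonneg_of_le_pi (by positivity)
      (by linarith [Real.pi_pos]) (by linarith [Real.pi_pos])
  have hc1 : c ≤ 1 := Real.cos_le_one _
  set ε : ℝ := a * (2 * c - 1) / 4 with hεdef
  have hε : 0 < ε := by
    have h1 : 0 < 2 * c - 1 := by linarith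
    rw [hεdef]; positivity
  -- rewrite hexp
  have ho : (fun z : ℂ => g z - (z + (a:ℂ) * z ^ (p+1))) =o[𝓝 (0:ℂ)] fun z => z ^ (p+1) :=
    hexp.congr (fun z => by ring) (fun z => rfl)
  have hh : AnalyticAt ℂ (fun z : ℂ => g z - (z + (a:ℂ) * z ^ (p+1))) 0 :=
    hg.sub (analyticAt_id.add (analyticAt_const.mul (analyticAt_id.pow (p+1))))
  have hod : deriv (fun z : ℂ => g z - (z + (a:ℂ) * z ^ (p+1))) =o[𝓝 (0:ℂ)]
      fun z => z ^ p := aux_deriv_isLittleO hh ho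
  have E1 : ∀ᶠ z : ℂ in 𝓝 0, ‖g z - (z + (a:ℂ) * z ^ (p+1))‖ ≤ ε * ‖z‖ ^ (p+1) := by
    filter_upwards [ho.def hε] with z hz
    simpa [norm_pow] using hz
  have E2 : ∀ᶠ z : ℂ in 𝓝 0,
      ‖deriv (fun z : ℂ => g z - (z + (a:ℂ) * z ^ (p+1))) z‖ ≤ ε * ‖z‖ ^ p := by
    filter_upwards [hod.def hε] with z hz
    simpa [norm_pow] using hz
  have E3 : ∀ᶠ z : ℂ in 𝓝 0,
      deriv (fun z : ℂ => g z - (z + (a:ℂ) * z ^ (p+1))) z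
        = deriv g z - (1 + (a:ℂ) * (((p:ℂ)+1) * z ^ p)) := by
    filter_upwards [hg.eventually_analyticAt] with z hz
    have hF : HasDerivAt (fun w : ℂ => w + (a:ℂ) * w ^ (p+1))
        (1 + (a:ℂ) * (((p:ℂ)+1) * z ^ p)) z := by
      have h2 := (hasDerivAt_pow (p+1) z).const_mul (a:ℂ)
      have h1 : HasDerivAt (fun w : ℂ => w + (a:ℂ) * w ^ (p+1)) _ z := (hasDerivAt_id' z).add h2
      simpa [Nat.add_sub_cancel] using h1
    exact ((hz.differentiableAt.hasDerivAt).sub hF).deriv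
  obtain ⟨δ, hδpos, hδ⟩ := Metric.eventually_nhds_iff.mp ((E1.and E2).and E3)
  refine ⟨δ, hδpos, fun z hz0 hzr harg => ?_⟩
  obtain ⟨⟨e1, e2⟩, e3⟩ := hδ (show dist z 0 < δ by rwa [dist_zero_right])
  have zne : z ≠ 0 := norm_pos_iff.mp hz0
  set t : ℝ := ‖z‖ ^ p with htdef
  have ht : 0 < t := pow_pos hz0 p
  set w : ℂ := z ^ p with hwdef
  have hwne : w ≠ 0 := pow_ne_zero _ zne
  have habs : ‖w‖ = t := by
    rw [hwdef, norm_pow, htdef]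
  have hcos : c ≤ Real.cos (Complex.arg w) := by
    rw [← Real.cos_abs (Complex.arg w)]
    exact Real.cos_le_cos_of_nonneg_of_le_pi (abs_nonneg _)
      (by linarith [Real.pi_pos]) harg
  have hre : c * t ≤ w.re := by
    have hca := Complex.cos_arg hwne
    rw [habs] at hca
    have : w.re = t * Real.cos (Complex.arg w) := by
      field_simp at hca ⊢; linarith [hca]
    rw [this]; nlinarith
  have hre_le : w.re ≤ t := by
    have := Complex.abs_re_le_norm w
    have h2 := le_abs_self w.re
    rw [habs] at this; linarith
  -- norms
  have n1 : ‖z + (a:ℂ) * z ^ (p+1)‖ = ‖z‖ * ‖1 + (a:ℂ) * w‖ := by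
    rw [show z + (a:ℂ) * z ^ (p+1) = z * (1 + (a:ℂ) * z ^ p) by ring, norm_mul, hwdef]
  have re1 : ((1:ℂ) + (a:ℂ) * w).re = 1 + a * w.re := by
    simp [Complex.add_re, Complex.mul_re]
  have n2 : 1 + a * (c * t) ≤ ‖1 + (a:ℂ) * w‖ := by
    have := Complex.re_le_norm (1 + (a:ℂ) * w)
    rw [re1] at this
    nlinarith
  have n3 : ‖1 + (a:ℂ) * w‖ ≤ 1 + a * t := by
    calc ‖1 + (a:ℂ) * w‖ ≤ ‖(1:ℂ)‖ + ‖(a:ℂ) * w‖ := norm_add_le _ _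
      _ = 1 + ‖a‖ * ‖w‖ := by
          rw [norm_one, norm_mul, Complex.norm_real]
      _ = 1 + a * t := by rw [habs, Real.norm_eq_abs, abs_of_pos ha]
  -- lower bound for ‖g z‖
  have hpow : ‖z‖ ^ (p+1) = t * ‖z‖ := by rw [pow_succ, htdef]
  have glow : ‖z‖ * (1 + a * (c * t)) - ε * (t * ‖z‖) ≤ ‖g z‖ := by
    have htri : ‖z + (a:ℂ) * z ^ (p+1)‖ - ‖g z - (z + (a:ℂ) * z ^ (p+1))‖ ≤ ‖g z‖ := by
      have h := norm_sub_norm_le (z + (a:ℂ) * z ^ (p+1)) (g z)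
      have h2 : ‖z + (a:ℂ) * z ^ (p+1) - g z‖ = ‖g z - (z + (a:ℂ) * z ^ (p+1))‖ :=
        norm_sub_rev _ _
      linarith
    rw [hpow] at e1
    have := n1 ▸ htri
    nlinarith
  have gup : ‖g z‖ ≤ ‖z‖ * (1 + a * t) + ε * (t * ‖z‖) := by
    have htri : ‖g z‖ ≤ ‖z + (a:ℂ) * z ^ (p+1)‖ + ‖g z - (z + (a:ℂ) * z ^ (p+1))‖ := by
      have := norm_add_le (z + (a:ℂ) * z ^ (p+1)) (g z - (z + (a:ℂ) * z ^ (p+1)))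
      simpa using this
    rw [hpow] at e1
    have hn := n1 ▸ htri
    nlinarith
  -- derivative bound
  have re2 : ((1:ℂ) + (a:ℂ) * (((p:ℂ)+1) * w)).re = 1 + a * (((p:ℝ)+1) * w.re) := by
    have : ((p:ℂ)+1) = (((p:ℝ)+1 : ℝ) : ℂ) := by push_cast; ring
    rw [this, show (a:ℂ) * ((((p:ℝ)+1 : ℝ):ℂ) * w) = ((a * ((p:ℝ)+1) : ℝ):ℂ) * w by
      push_cast; ring]
    simp [Complex.add_re, Complex.mul_re]
    ring
  have dlow : 1 + a * (((p:ℝ)+1) * (c * t)) - ε * t ≤ ‖deriv g z‖ := by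
    have hd2 : ‖deriv g z - (1 + (a:ℂ) * (((p:ℂ)+1) * w))‖ ≤ ε * t := by
      rw [hwdef]; rw [e3] at e2; simpa [htdef] using e2
    have hre2 : 1 + a * (((p:ℝ)+1) * (c * t)) ≤ ‖1 + (a:ℂ) * (((p:ℂ)+1) * w)‖ := by
      have h := Complex.re_le_norm (1 + (a:ℂ) * (((p:ℂ)+1) * w))
      rw [re2] at h
      have hmono := mul_le_mul_of_nonneg_left hre
        (show (0:ℝ) ≤ a * ((p:ℝ)+1) by positivity)
      nlinarith [hmono]
    have htri : ‖1 + (a:ℂ) * (((p:ℂ)+1) * w)‖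
        - ‖deriv g z - (1 + (a:ℂ) * (((p:ℂ)+1) * w))‖ ≤ ‖deriv g z‖ := by
      have h := norm_sub_norm_le (1 + (a:ℂ) * (((p:ℂ)+1) * w)) (deriv g z)
      have h2 := norm_sub_rev (1 + (a:ℂ) * (((p:ℂ)+1) * w)) (deriv g z)
      linarith
    linarith
  -- final inequalities
  have hp2 : (2:ℝ) ≤ (p:ℝ) + 1 := by
    have : (1:ℝ) ≤ (p:ℝ) := by exact_mod_cast hp
    linarith
  have key1 : ‖z‖ < ‖g z‖ := by
    have hεlt : ε < a * c := by rw [hεdef]; nlinarith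
    nlinarith [mul_pos ht hz0]
  refine ⟨key1, ?_, (one_lt_div hz0).mpr key1⟩
  rw [gt_iff_lt, div_lt_iff₀ hz0]
  have hkey : 1 + (a + ε) * t < 1 + (a * (((p:ℝ)+1) * c) - ε) * t := by
    have : a + ε < a * (((p:ℝ)+1) * c) - ε := by nlinarith
    nlinarith
  nlinarith [mul_pos ht hz0, mul_le_mul_of_nonneg_right dlow (le_of_lt hz0)]
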